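/- For any positive integer n and nonzero field elements y_1,...,y_n, the n×n determinant det(y_h^{2t-1} - y_h^{1-2t})_{1≤h,t≤n} equals (y_1···y_n)^{-2n+1} · ∏_{1≤h<t≤n}(y_h^2 - y_t^2)(1 - y_h^2 y_t^2) · ∏_{h=1}^n (y_h^2 - 1). -/

import Mathlib

open Polynomial Finset

/-- Chebyshev-like polynomials: `(y - y⁻¹) * qq t ((y+y⁻¹)^2) = y^(2t+1) - y^(-(2t+1))`. -/
noncomputable def qq (F : Type*) [Field F] : ℕ → F[X]
  | 0 => 1
  | 1 => X - 1
  | (t+2) => (X - 2) * qq F (t+1) - qq F t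

lemma qq_monic_deg (F : Type*) [Field F] :
    ∀ t : ℕ, ((qq F t).Monic ∧ (qq F t).natDegree = t) ∧
      ((qq F (t+1)).Monic ∧ (qq F (t+1)).natDegree = t+1) := by
  intro t
  induction t with
  | zero =>
    refine ⟨⟨monic_one, natDegree_one⟩, ?_, ?_⟩
    · simpa [qq] using monic_X_sub_C (1 : F)
    · simpa [qq] using natDegree_X_sub_C (1 : F)
  | succ t ih =>
    obtain ⟨⟨hm0, hd0⟩, hm1, hd1⟩ := ih
    have hmul : ((X - 2) * qq F (t+1)).Monic := by
      simpa [map_ofNat] using (monic_X_sub_C (2 : F)).mul hm1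
    have hC2 : (X - 2 : F[X]) = X - C 2 := by rw [map_ofNat]
    have hdmul : ((X - 2) * qq F (t+1)).natDegree = t + 2 := by
      rw [hC2, (monic_X_sub_C (2:F)).natDegree_mul hm1, natDegree_X_sub_C, hd1]; omega
    have hlt : (qq F t).natDegree < ((X - 2) * qq F (t+1)).natDegree := by omega
    have key : (qq F (t+2)).Monic ∧ (qq F (t+2)).natDegree = t + 2 := by
      have heq : qq F (t+2) = (X - 2) * qq F (t+1) - qq F t := rfl
      constructor
      · rw [heq, sub_eq_add_neg]
        refine hmul.add_of_left ?_
        rw [degree_neg, degree_eq_natDegree hm0.ne_zero, degree_eq_natDegree hmul.ne_zero]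
        exact_mod_cast hlt
      · rw [heq, natDegree_sub_eq_left_of_natDegree_lt hlt, hdmul]
    exact ⟨⟨hm1, hd1⟩, key⟩

lemma qq_eval {F : Type*} [Field F] {y : F} (hy : y ≠ 0) :
    ∀ t : ℕ, (y - y⁻¹) * (qq F t).eval ((y + y⁻¹)^2)
      = y ^ (2 * (t : ℤ) + 1) - y ^ (-(2 * (t : ℤ) + 1)) := by
  have hkey : ∀ t : ℕ,
      ((y - y⁻¹) * (qq F t).eval ((y + y⁻¹)^2)
        = y ^ (2 * (t : ℤ) + 1) - y ^ (-(2 * (t : ℤ) + 1))) ∧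
      ((y - y⁻¹) * (qq F (t+1)).eval ((y + y⁻¹)^2)
        = y ^ (2 * ((t:ℤ)+1) + 1) - y ^ (-(2 * ((t:ℤ)+1) + 1))) := by
    intro t
    induction t with
    | zero =>
      constructor
      · norm_num [qq]
      · have h3 : (2 * (((0:ℕ):ℤ)+1) + 1) = ((3:ℕ):ℤ) := by norm_num
        rw [h3]
        simp only [zpow_neg, zpow_natCast]
        simp only [qq, eval_sub, eval_X, eval_one]
        field_simp
        ring
    | succ t ih =>
      obtain ⟨ih0, ih1⟩ := ih
      refine ⟨ih1, ?_⟩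
      have heq : qq F (t+2) = (X - 2) * qq F (t+1) - qq F t := rfl
      have e1 : (2 * ((t:ℤ)) + 1) = ((2*t+1:ℕ):ℤ) := by push_cast; ring
      have e2 : (2 * ((t:ℤ)+1) + 1) = ((2*t+3:ℕ):ℤ) := by push_cast; ring
      have e3 : (2 * (((t:ℕ)+1:ℕ):ℤ)+1) + 2 = ((2*t+5:ℕ):ℤ) := by push_cast; ring
      have e3' : (2 * ((((t+1):ℕ):ℤ)+1) + 1) = ((2*t+5:ℕ):ℤ) := by push_cast; ring
      rw [e2] at ih1
      rw [e1] at ih0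
      rw [e3']
      simp only [zpow_neg, zpow_natCast] at ih0 ih1 ⊢
      rw [heq]
      have expand : (y - y⁻¹) * (eval ((y + y⁻¹)^2) ((X - 2) * qq F (t+1) - qq F t))
          = ((y + y⁻¹)^2 - 2) * ((y - y⁻¹) * eval ((y + y⁻¹)^2) (qq F (t+1)))
            - (y - y⁻¹) * eval ((y + y⁻¹)^2) (qq F t) := by
        simp [eval_mul, eval_sub]; ring
      rw [expand, ih0, ih1]
      have h1 : y ^ (2*t+1) ≠ 0 := pow_ne_zero _ hy
      have h3 : y ^ (2*t+3) ≠ 0 := pow_ne_zero _ hy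
      have h5 : y ^ (2*t+5) ≠ 0 := pow_ne_zero _ hy
      field_simp
      ring
  exact fun t => (hkey t).1

lemma prod_pairs_mul {F : Type*} [CommMonoid F] (n : ℕ) (y : Fin n → F) :
    ∏ t : Fin n, ∏ h ∈ Finset.Iio t, (y h * y t) = (∏ h, y h) ^ (n - 1) := by
  have swap : ∏ t : Fin n, ∏ h ∈ Finset.Iio t, y h
      = ∏ h : Fin n, ∏ t ∈ Finset.Ioi h, y h := by
    refine Finset.prod_comm' ?_
    intro x z
    simp [Finset.mem_Iio, Finset.mem_Ioi]
  calc ∏ t : Fin n, ∏ h ∈ Finset.Iio t, (y h * y t)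
      = (∏ t : Fin n, ∏ h ∈ Finset.Iio t, y h) *
        (∏ t : Fin n, ∏ h ∈ Finset.Iio t, y t) := by
        rw [← Finset.prod_mul_distrib]
        exact Finset.prod_congr rfl fun t _ => Finset.prod_mul_distrib
    _ = (∏ h : Fin n, y h ^ (n - 1 - (h:ℕ))) * (∏ t : Fin n, y t ^ (t:ℕ)) := by
        rw [swap]
        congr 1
        · exact Finset.prod_congr rfl fun h _ => by rw [Finset.prod_const, Fin.card_Ioi]
        · exact Finset.prod_congr rfl fun t _ => by rw [Finset.prod_const, Fin.card_Iio]
    _ = ∏ h : Fin n, y h ^ (n - 1) := by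
        rw [← Finset.prod_mul_distrib]
        refine Finset.prod_congr rfl fun h _ => ?_
        rw [← pow_add]
        congr 1
        have := h.isLt
        omega
    _ = (∏ h, y h) ^ (n - 1) := by rw [Finset.prod_pow]

/-- Equation (ortho2): odd-orthogonal-type Vandermonde determinant evaluation. -/
theorem stmt_1 {F : Type*} [Field F] (n : ℕ) (hn : 0 < n) (y : Fin n → F)
    (hy : ∀ h, y h ≠ 0) :
    Matrix.det (Matrix.of fun h t : Fin n =>
        y h ^ ((2 * (t : ℕ) + 1 : ℤ)) - y h ^ (-(2 * (t : ℕ) + 1 : ℤ))) =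
      (∏ h, y h) ^ ((1 - 2 * (n : ℤ))) *
        (∏ t : Fin n, ∏ h ∈ Finset.Iio t,
          ((y h ^ 2 - y t ^ 2) * (1 - y h ^ 2 * y t ^ 2))) *
        ∏ h, (y h ^ 2 - 1) := by
  set w : Fin n → F := fun h => (y h + (y h)⁻¹) ^ 2 with hw
  -- Step 1: factor rows
  have hM : (Matrix.of fun h t : Fin n =>
        y h ^ ((2 * (t : ℕ) + 1 : ℤ)) - y h ^ (-(2 * (t : ℕ) + 1 : ℤ)))
      = Matrix.of fun h t : Fin n =>
          (y h - (y h)⁻¹) * (Matrix.of fun h t : Fin n => (qq F (t:ℕ)).eval (w h)) h t := by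
    ext h t
    simp only [Matrix.of_apply]
    rw [qq_eval (hy h) (t:ℕ)]
  rw [hM, Matrix.det_mul_column]
  -- Step 2: Vandermonde
  have hdeg : ∀ i : Fin n, (qq F (i:ℕ)).natDegree = (i:ℕ) :=
    fun i => ((qq_monic_deg F (i:ℕ)).1).2
  have hmon : ∀ i : Fin n, (qq F (i:ℕ)).Monic :=
    fun i => ((qq_monic_deg F (i:ℕ)).1).1
  rw [← Matrix.det_eval_matrixOfPolynomials_eq_det_vandermonde w (fun i => qq F (i:ℕ)) hdeg hmon,
    Matrix.det_vandermonde]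
  -- rewrite w j - w i
  have hwdiff : ∀ i : Fin n, ∀ j ∈ Finset.Ioi i, w j - w i
      = ((y i ^ 2 - y j ^ 2) * (1 - y i ^ 2 * y j ^ 2)) * ((y i * y j) * (y i * y j))⁻¹ := by
    intro i j _
    have hi := hy i; have hj := hy j
    rw [hw]
    field_simp
    ring
  rw [Finset.prod_congr rfl fun i _ => Finset.prod_congr rfl (hwdiff i)]
  -- swap Ioi to Iio form
  have hswap : ∀ f : Fin n → Fin n → F,
      (∏ i : Fin n, ∏ j ∈ Finset.Ioi i, f i j) = ∏ t : Fin n, ∏ h ∈ Finset.Iio t, f h t := by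
    intro f
    refine (Finset.prod_comm' ?_)
    intro x z
    simp [Finset.mem_Iio, Finset.mem_Ioi]
  rw [hswap]
  simp only [Finset.prod_mul_distrib, Finset.prod_inv_distrib]
  -- the diagonal factor
  have hdiag : (∏ h, (y h - (y h)⁻¹)) = (∏ h, (y h ^ 2 - 1)) * (∏ h, y h)⁻¹ := by
    rw [← Finset.prod_inv_distrib, ← Finset.prod_mul_distrib]
    refine Finset.prod_congr rfl fun h _ => ?_
    have := hy h
    field_simp
  rw [hdiag]
  have hcomb : (∏ t : Fin n, ∏ h ∈ Finset.Iio t, y h) * (∏ t : Fin n, ∏ h ∈ Finset.Iio t, y t)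
      = ∏ t : Fin n, ∏ h ∈ Finset.Iio t, (y h * y t) := by
    rw [← Finset.prod_mul_distrib]
    exact Finset.prod_congr rfl fun t _ => Finset.prod_mul_distrib.symm
  rw [hcomb, prod_pairs_mul n y]
  have hP : (∏ h, y h) ≠ 0 := Finset.prod_ne_zero_iff.mpr fun h _ => hy h
  have hzpow : (∏ h, y h) ^ (1 - 2 * (n:ℤ))
      = (∏ h, y h)⁻¹ * (((∏ h, y h) ^ (n-1)) * ((∏ h, y h) ^ (n-1)))⁻¹ := by
    have h1 : (∏ h, y h)⁻¹ * (((∏ h, y h) ^ (n-1)) * ((∏ h, y h) ^ (n-1)))⁻¹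
        = ((∏ h, y h) ^ (n - 1 + (n-1) + 1))⁻¹ := by
      rw [← pow_add, ← mul_inv, pow_succ, mul_comm]
    rw [h1, ← zpow_natCast (∏ h, y h) (n - 1 + (n-1) + 1), ← zpow_neg]
    congr 1
    omega
  rw [hzpow]
  ring
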